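/- Let f : [0,1] → ℝ be continuous and let a > −π². Then for every x ∈ [0,1] the function t ↦ e^{−a·t}·u1(x,t) is Lebesgue integrable on [0,∞), and there is a constant C (independent of x, e.g. C = 2‖f‖_∞·Σ_{n=1}^∞ 1/(n²π²+a)) bounding ∫_0^∞ e^{−a·t}|u1(x,t)| dt uniformly in x ∈ [0,1]. -/

import Mathlib

open MeasureTheory Set
open scoped Real

/-- `u1 f x t = 2 Σ_{n=1}^∞ (∫_0^1 f(y) sin(nπy) dy) e^{−n²π²t} sin(nπx)`. -/
noncomputable def u1 (f : ℝ → ℝ) (x t : ℝ) : ℝ :=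
  2 * ∑' n : ℕ,
    (∫ y in (0:ℝ)..1, f y * Real.sin (((n : ℝ) + 1) * π * y)) *
      Real.exp (-(((n : ℝ) + 1) ^ 2) * π ^ 2 * t) * Real.sin (((n : ℝ) + 1) * π * x)

private lemma integral_exp_neg_mul_Ioi_aux {b : ℝ} (hb : 0 < b) :
    ∫ t in Set.Ioi (0:ℝ), Real.exp (-(b * t)) = 1 / b := by
  have h := MeasureTheory.integral_comp_mul_left_Ioi (fun x => Real.exp (-x)) 0 hb
  simp only [mul_zero, integral_exp_neg_Ioi_zero, smul_eq_mul, mul_one] at h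
  rw [h, one_div]

/-- If `f : [0,1] → ℝ` is continuous and `a > −π²`, then for every
`x ∈ [0,1]` the function `t ↦ e^{−a t} u1 f x t` is Lebesgue integrable on `[0,∞)`,
and the constant `C = 2 ‖f‖_∞ Σ_{n=1}^∞ 1/(n²π² + a)` (independent of `x`) bounds
`∫_0^∞ e^{−a t} |u1 f x t| dt` uniformly in `x ∈ [0,1]`. -/
theorem u1_exp_weight_integrable
    (f : ℝ → ℝ) (hf : ContinuousOn f (Set.Icc 0 1))
    (a : ℝ) (ha : -π ^ 2 < a) :
    ∀ x ∈ Set.Icc (0 : ℝ) 1,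
      IntegrableOn (fun t : ℝ => Real.exp (-a * t) * u1 f x t) (Set.Ici 0) ∧
        ∫ t in Set.Ici (0 : ℝ), Real.exp (-a * t) * |u1 f x t|
          ≤ 2 * (⨆ y : Set.Icc (0 : ℝ) 1, |f y|) *
              ∑' n : ℕ, 1 / (((n : ℝ) + 1) ^ 2 * π ^ 2 + a) := by
  intro x hx
  obtain ⟨C, hC⟩ := isCompact_Icc.exists_bound_of_continuousOn hf
  have hbdd : BddAbove (Set.range fun y : Set.Icc (0:ℝ) 1 => |f y|) := by
    refine ⟨C, ?_⟩
    rintro r ⟨y, rfl⟩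
    simpa using hC y y.2
  set M : ℝ := ⨆ y : Set.Icc (0:ℝ) 1, |f y| with hMdef
  have hMle : ∀ y ∈ Set.Icc (0:ℝ) 1, |f y| ≤ M := fun y hy =>
    le_ciSup hbdd (⟨y, hy⟩ : Set.Icc (0:ℝ) 1)
  have hM0 : 0 ≤ M := le_trans (abs_nonneg _) (hMle 0 ⟨le_refl 0, zero_le_one⟩)
  have hπ2 : (0:ℝ) < π ^ 2 := by positivity
  have hb : ∀ n : ℕ, 0 < ((n:ℝ)+1)^2 * π^2 + a := by
    intro n
    have h0 : (0:ℝ) ≤ (n:ℝ) := Nat.cast_nonneg n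
    have h1 : (1:ℝ) ≤ ((n:ℝ)+1)^2 := by nlinarith
    nlinarith
  -- summability of `1 / b n`
  have hsum1 : Summable fun n : ℕ => 1 / (((n:ℝ)+1)^2 * π^2 + a) := by
    set m : ℝ := min (π^2) (π^2 + a) with hm
    have hm0 : 0 < m := lt_min hπ2 (by linarith)
    have hbm : ∀ n : ℕ, ((n:ℝ)+1)^2 * m ≤ ((n:ℝ)+1)^2 * π^2 + a := by
      intro n
      have h0 : (0:ℝ) ≤ (n:ℝ) := Nat.cast_nonneg n
      have h1 : (1:ℝ) ≤ ((n:ℝ)+1)^2 := by nlinarith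
      have h2 : m ≤ π^2 := min_le_left _ _
      have h3 : m ≤ π^2 + a := min_le_right _ _
      rcases le_or_gt a 0 with h | h
      · nlinarith
      · nlinarith
    have h2 : Summable fun n : ℕ => 1 / ((n:ℝ)+1)^2 := by
      have := (summable_nat_add_iff 1).mpr
        (Real.summable_one_div_nat_pow.mpr (by norm_num : 1 < 2))
      refine this.congr fun n => ?_
      push_cast
      ring
    refine ((h2.mul_left (1/m)).of_nonneg_of_le (fun n => one_div_nonneg.mpr (hb n).le) fun n => ?_)
    have hpos : 0 < ((n:ℝ)+1)^2 * m := by positivity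
    calc 1 / (((n:ℝ)+1)^2 * π^2 + a) ≤ 1 / (((n:ℝ)+1)^2 * m) :=
          one_div_le_one_div_of_le hpos (hbm n)
      _ = 1/m * (1/((n:ℝ)+1)^2) := by
          rw [div_mul_div_comm, one_mul, mul_comm]
  -- coefficient bound
  have hc : ∀ n : ℕ, |∫ y in (0:ℝ)..1, f y * Real.sin (((n:ℝ)+1) * π * y)| ≤ M := by
    intro n
    have h := intervalIntegral.norm_integral_le_of_norm_le_const
      (a := (0:ℝ)) (b := 1) (C := M)
      (f := fun y => f y * Real.sin (((n:ℝ)+1) * π * y)) ?_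
    · simpa using h
    · intro y hy
      rw [Set.uIoc_of_le (by norm_num : (0:ℝ) ≤ 1)] at hy
      have hy' : y ∈ Set.Icc (0:ℝ) 1 := ⟨hy.1.le, hy.2⟩
      have h1 := hMle y hy'
      have hs : |Real.sin (((n:ℝ)+1) * π * y)| ≤ 1 := Real.abs_sin_le_one _
      calc ‖f y * Real.sin (((n:ℝ)+1) * π * y)‖
          = |f y| * |Real.sin (((n:ℝ)+1) * π * y)| := abs_mul _ _
        _ ≤ M * 1 := mul_le_mul h1 hs (abs_nonneg _) hM0
        _ = M := mul_one M
  -- core summability of the exponential series for `t > 0`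
  have hcore : ∀ t : ℝ, 0 < t →
      Summable fun n : ℕ => Real.exp (-(((n:ℝ)+1)^2 * π^2 * t)) := by
    intro t ht
    have hr0 : (0:ℝ) ≤ Real.exp (-(π^2 * t)) := (Real.exp_pos _).le
    have hr1 : Real.exp (-(π^2 * t)) < 1 := Real.exp_lt_one_iff.mpr (by nlinarith)
    have hgeo : Summable fun n : ℕ => Real.exp (-(π^2*t)) ^ (n+1) := by
      refine ((summable_geometric_of_lt_one hr0 hr1).mul_left
        (Real.exp (-(π^2*t)))).congr fun n => ?_
      exact (pow_succ' _ _).symm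
    refine hgeo.of_nonneg_of_le (fun n => (Real.exp_pos _).le) fun n => ?_
    rw [← Real.exp_nat_mul]
    apply Real.exp_le_exp.mpr
    push_cast
    have h0 : (0:ℝ) ≤ (n:ℝ) := Nat.cast_nonneg n
    nlinarith [mul_nonneg (mul_nonneg (mul_nonneg h0 (by linarith : (0:ℝ) ≤ (n:ℝ)+1)) hπ2.le) ht.le]
  -- termwise bound
  have hbound : ∀ (n : ℕ) (t : ℝ),
      ‖(∫ y in (0:ℝ)..1, f y * Real.sin (((n:ℝ)+1) * π * y)) *
        Real.exp (-(((n:ℝ)+1)^2) * π^2 * t) * Real.sin (((n:ℝ)+1) * π * x)‖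
        ≤ M * Real.exp (-(((n:ℝ)+1)^2 * π^2 * t)) := by
    intro n t
    rw [Real.norm_eq_abs, abs_mul, abs_mul, Real.abs_exp,
      show -(((n:ℝ)+1)^2) * π^2 * t = -(((n:ℝ)+1)^2 * π^2 * t) by ring]
    calc |∫ y in (0:ℝ)..1, f y * Real.sin (((n:ℝ)+1) * π * y)| *
          Real.exp (-(((n:ℝ)+1)^2 * π^2 * t)) * |Real.sin (((n:ℝ)+1) * π * x)|
        ≤ M * Real.exp (-(((n:ℝ)+1)^2 * π^2 * t)) * 1 := by
          apply mul_le_mul _ (Real.abs_sin_le_one _) (abs_nonneg _) (by positivity)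
          exact mul_le_mul_of_nonneg_right (hc n) (Real.exp_pos _).le
      _ = M * Real.exp (-(((n:ℝ)+1)^2 * π^2 * t)) := mul_one _
  -- summability of the series defining u1 for t > 0
  have hsumm : ∀ t : ℝ, 0 < t → Summable (fun n : ℕ =>
      (∫ y in (0:ℝ)..1, f y * Real.sin (((n:ℝ)+1) * π * y)) *
        Real.exp (-(((n:ℝ)+1)^2) * π^2 * t) * Real.sin (((n:ℝ)+1) * π * x)) := by
    intro t ht
    exact Summable.of_norm_bounded ((hcore t ht).mul_left M) (fun n => hbound n t)
  -- pointwise bound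
  have hpt : ∀ t : ℝ, 0 < t →
      Real.exp (-a*t) * |u1 f x t|
        ≤ ∑' n : ℕ, 2 * M * Real.exp (-((((n:ℝ)+1)^2 * π^2 + a) * t)) := by
    intro t ht
    have h1 : |∑' n : ℕ, (∫ y in (0:ℝ)..1, f y * Real.sin (((n:ℝ)+1) * π * y)) *
          Real.exp (-(((n:ℝ)+1)^2) * π^2 * t) * Real.sin (((n:ℝ)+1) * π * x)|
        ≤ ∑' n : ℕ, M * Real.exp (-(((n:ℝ)+1)^2 * π^2 * t)) := by
      have := tsum_of_norm_bounded (((hcore t ht).mul_left M).hasSum) (fun n => hbound n t)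
      simpa [Real.norm_eq_abs] using this
    rw [u1, abs_mul, abs_two]
    calc Real.exp (-a*t) * (2 * |∑' n : ℕ, (∫ y in (0:ℝ)..1, f y * Real.sin (((n:ℝ)+1) * π * y)) *
            Real.exp (-(((n:ℝ)+1)^2) * π^2 * t) * Real.sin (((n:ℝ)+1) * π * x)|)
        ≤ Real.exp (-a*t) * (2 * ∑' n : ℕ, M * Real.exp (-(((n:ℝ)+1)^2 * π^2 * t))) := by
          have h2 : (0:ℝ) < Real.exp (-a*t) := Real.exp_pos _
          nlinarith
      _ = ∑' n : ℕ, 2 * M * Real.exp (-((((n:ℝ)+1)^2 * π^2 + a) * t)) := by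
          rw [← mul_assoc, ← tsum_mul_left]
          refine tsum_congr fun n => ?_
          rw [show -((((n:ℝ)+1)^2 * π^2 + a) * t) = (-a*t) + (-(((n:ℝ)+1)^2 * π^2 * t)) by ring,
            Real.exp_add]
          ring
  -- the dominating series
  set g : ℕ → ℝ → ℝ :=
    fun n t => 2 * M * Real.exp (-((((n:ℝ)+1)^2 * π^2 + a) * t)) with hgdef
  have hgc : ∀ n, Continuous (g n) := by
    intro n
    exact continuous_const.mul (Real.continuous_exp.comp
      ((continuous_const.mul continuous_id).neg))
  have hgnn : ∀ n t, 0 ≤ g n t := fun n t => by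
    simp only [hgdef]
    positivity
  have hgint : ∀ n, IntegrableOn (g n) (Set.Ioi 0) := by
    intro n
    have h := (exp_neg_integrableOn_Ioi 0 (hb n)).const_mul (2*M)
    refine IntegrableOn.congr_fun h (fun t _ => ?_) measurableSet_Ioi
    simp only [hgdef, neg_mul]
  have hgval : ∀ n, ∫ t in Set.Ioi (0:ℝ), g n t
      = 2 * M * (1 / (((n:ℝ)+1)^2 * π^2 + a)) := by
    intro n
    simp only [hgdef]
    rw [MeasureTheory.integral_const_mul, integral_exp_neg_mul_Ioi_aux (hb n)]
  have hgsum : Summable fun n : ℕ => ∫ t in Set.Ioi (0:ℝ), g n t :=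
    (hsum1.mul_left (2*M)).congr fun n => (hgval n).symm
  have hgts : ∀ t : ℝ, 0 < t → Summable fun n : ℕ => g n t := by
    intro t ht
    refine ((hcore t ht).mul_left (2 * M * Real.exp (-a*t))).congr fun n => ?_
    simp only [hgdef]
    rw [show -((((n:ℝ)+1)^2 * π^2 + a) * t) = (-a*t) + (-(((n:ℝ)+1)^2 * π^2 * t)) by ring,
      Real.exp_add]
    ring
  -- measurability of the dominating function
  have hBmeas : AEStronglyMeasurable (fun t => ∑' n, g n t)
      (volume.restrict (Set.Ioi 0)) := by
    apply aestronglyMeasurable_of_tendsto_ae (u := (Filter.atTop : Filter ℕ))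
      (f := fun N t => ∑ n ∈ Finset.range N, g n t)
    · exact fun N => (continuous_finset_sum _ fun n _ => hgc n).aestronglyMeasurable
    · filter_upwards [ae_restrict_mem measurableSet_Ioi] with t ht
      exact (hgts t ht).hasSum.tendsto_sum_nat
  -- integrability of the dominating function
  have hBint : IntegrableOn (fun t => ∑' n, g n t) (Set.Ioi 0) := by
    refine ⟨hBmeas, ?_⟩
    have hBnn : 0 ≤ᵐ[volume.restrict (Set.Ioi (0:ℝ))] fun t => ∑' n, g n t :=
      Filter.Eventually.of_forall fun t => tsum_nonneg fun n => hgnn n t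
    rw [hasFiniteIntegral_iff_ofReal hBnn]
    have hchain : ∫⁻ t in Set.Ioi (0:ℝ), ENNReal.ofReal (∑' n, g n t)
        ≤ ENNReal.ofReal (∑' n, ∫ t in Set.Ioi (0:ℝ), g n t) := by
      calc ∫⁻ t in Set.Ioi (0:ℝ), ENNReal.ofReal (∑' n, g n t)
          ≤ ∫⁻ t in Set.Ioi (0:ℝ), ∑' n, ENNReal.ofReal (g n t) := by
            apply lintegral_mono_ae
            filter_upwards [ae_restrict_mem measurableSet_Ioi] with t ht
            rw [ENNReal.ofReal_tsum_of_nonneg (fun n => hgnn n t) (hgts t ht)]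
        _ = ∑' n, ∫⁻ t in Set.Ioi (0:ℝ), ENNReal.ofReal (g n t) :=
            lintegral_tsum fun n =>
              (ENNReal.measurable_ofReal.comp (hgc n).measurable).aemeasurable
        _ = ∑' n, ENNReal.ofReal (∫ t in Set.Ioi (0:ℝ), g n t) := by
            refine tsum_congr fun n => ?_
            rw [ofReal_integral_eq_lintegral_ofReal (hgint n)
              (Filter.Eventually.of_forall fun t => hgnn n t)]
        _ = ENNReal.ofReal (∑' n, ∫ t in Set.Ioi (0:ℝ), g n t) := by
            rw [ENNReal.ofReal_tsum_of_nonneg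
              (fun n => integral_nonneg fun t => hgnn n t) hgsum]
    exact lt_of_le_of_lt hchain ENNReal.ofReal_lt_top
  -- value of the integral of the dominating function
  have hBval : ∫ t in Set.Ioi (0:ℝ), (∑' n, g n t)
      = ∑' n, ∫ t in Set.Ioi (0:ℝ), g n t := by
    refine (integral_tsum_of_summable_integral_norm (fun n => hgint n) ?_).symm
    refine hgsum.congr fun n => ?_
    refine integral_congr_ae (Filter.Eventually.of_forall fun t => ?_)
    simp [Real.norm_eq_abs, abs_of_nonneg (hgnn n t)]
  -- measurability of F
  have hFmeas : AEStronglyMeasurable (fun t => Real.exp (-a*t) * u1 f x t)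
      (volume.restrict (Set.Ioi 0)) := by
    apply aestronglyMeasurable_of_tendsto_ae (u := (Filter.atTop : Filter ℕ))
      (f := fun N t => Real.exp (-a*t) * (2 * ∑ n ∈ Finset.range N,
        (∫ y in (0:ℝ)..1, f y * Real.sin (((n:ℝ)+1) * π * y)) *
          Real.exp (-(((n:ℝ)+1)^2) * π^2 * t) * Real.sin (((n:ℝ)+1) * π * x)))
    · intro N
      apply Continuous.aestronglyMeasurable
      fun_prop
    · filter_upwards [ae_restrict_mem measurableSet_Ioi] with t ht
      have h := (hsumm t ht).hasSum.tendsto_sum_nat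
      simpa [u1] using (h.const_mul 2).const_mul (Real.exp (-a*t))
  -- a.e. bound for F
  have hFB : ∀ᵐ t ∂(volume.restrict (Set.Ioi (0:ℝ))),
      ‖Real.exp (-a*t) * u1 f x t‖ ≤ ∑' n, g n t := by
    filter_upwards [ae_restrict_mem measurableSet_Ioi] with t ht
    rw [Real.norm_eq_abs, abs_mul, abs_of_pos (Real.exp_pos _)]
    exact hpt t ht
  have hFint : IntegrableOn (fun t => Real.exp (-a*t) * u1 f x t) (Set.Ioi 0) :=
    Integrable.mono' hBint hFmeas hFB
  have habs : (fun t => Real.exp (-a*t) * |u1 f x t|)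
      = fun t => ‖Real.exp (-a*t) * u1 f x t‖ := by
    funext t
    rw [Real.norm_eq_abs, abs_mul, abs_of_pos (Real.exp_pos _)]
  constructor
  · rw [integrableOn_Ici_iff_integrableOn_Ioi]
    exact hFint
  · calc ∫ t in Set.Ici (0:ℝ), Real.exp (-a*t) * |u1 f x t|
        = ∫ t in Set.Ioi (0:ℝ), Real.exp (-a*t) * |u1 f x t| :=
          integral_Ici_eq_integral_Ioi
      _ ≤ ∫ t in Set.Ioi (0:ℝ), (∑' n, g n t) := by
          refine integral_mono_ae (by rw [habs]; exact hFint.norm) hBint ?_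
          filter_upwards [ae_restrict_mem measurableSet_Ioi] with t ht
          exact hpt t ht
      _ = ∑' n, ∫ t in Set.Ioi (0:ℝ), g n t := hBval
      _ = 2 * M * ∑' n : ℕ, 1 / (((n:ℝ)+1)^2 * π^2 + a) := by
          rw [← tsum_mul_left]
          exact tsum_congr hgval
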